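/- Two-dimensional shifting (core of the (1+1/k)² approximation): Let S be a finite set of points in the Euclidean plane and ℓ₁, ℓ₂ positive integers. For shifts j₁ ∈ {0,…,ℓ₁-1}, j₂ ∈ {0,…,ℓ₂-1} and integers k₁, k₂, let B = {p ∈ S : 2(ℓ₁k₁ + j₁) ≤ p₁ < 2(ℓ₁(k₁+1) + j₁) and 2(ℓ₂k₂ + j₂) ≤ p₂ < 2(ℓ₂(k₂+1) + j₂)} be the corresponding rectangular block. Then there exist shifts j₁, j₂ such that Σ_{k₁,k₂} γ_S(B_{j₁,j₂,k₁,k₂}) ≤ (1 + 1/ℓ₁)(1 + 1/ℓ₂) · γ_S(S), where the sum ranges over the (finitely many) pairs (k₁, k₂) with nonempty block and γ_S(T) denotes the minimum cardinality of a subset of S that dominates T. -/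
import Mathlib

/-- The Euclidean plane. -/
abbrev Plane : Type := EuclideanSpace ℝ (Fin 2)

noncomputable instance : DecidableEq Plane := Classical.decEq _

attribute [local instance] Classical.propDecidable

/-- `D` dominates `T` if every point of `T` is within distance `1` of some point of `D`. -/
def Dominates (D T : Finset Plane) : Prop := ∀ p ∈ T, ∃ q ∈ D, dist p q ≤ 1

/-- `gamma S T` is the minimum cardinality of a subset of `S` that dominates `T`. -/
noncomputable def gamma (S T : Finset Plane) : ℕ :=
  sInf {n : ℕ | ∃ D ⊆ S, Dominates D T ∧ D.card = n}

/-- The rectangular block of `S` with horizontal shift `j₁`, vertical shift `j₂` and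
indices `k₁, k₂`: the points `p ∈ S` with `2(ℓ₁k₁ + j₁) ≤ p₁ < 2(ℓ₁(k₁+1) + j₁)` and
`2(ℓ₂k₂ + j₂) ≤ p₂ < 2(ℓ₂(k₂+1) + j₂)`. -/
noncomputable def block2 (S : Finset Plane) (ℓ₁ ℓ₂ j₁ j₂ : ℕ) (k₁ k₂ : ℤ) : Finset Plane :=
  S.filter fun p =>
    (2 * ((ℓ₁ : ℝ) * (k₁ : ℝ) + (j₁ : ℝ)) ≤ p 0 ∧
      p 0 < 2 * ((ℓ₁ : ℝ) * ((k₁ : ℝ) + 1) + (j₁ : ℝ))) ∧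
    (2 * ((ℓ₂ : ℝ) * (k₂ : ℝ) + (j₂ : ℝ)) ≤ p 1 ∧
      p 1 < 2 * ((ℓ₂ : ℝ) * ((k₂ : ℝ) + 1) + (j₂ : ℝ)))

/-! ### Auxiliary lemmas -/

lemma coord_abs_le_dist (p q : Plane) (i : Fin 2) : |p i - q i| ≤ dist p q := by
  rw [EuclideanSpace.dist_eq]
  rw [show |p i - q i| = Real.sqrt (dist (p i) (q i) ^ 2) by
    rw [Real.sqrt_sq_eq_abs, Real.dist_eq, abs_abs]]
  exact Real.sqrt_le_sqrt (Finset.single_le_sum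
    (f := fun j => dist (p j) (q j) ^ 2) (fun j _ => sq_nonneg _) (Finset.mem_univ i))

lemma gamma_le (S T D : Finset Plane) (hD : D ⊆ S) (hdom : Dominates D T) :
    gamma S T ≤ D.card := Nat.sInf_le ⟨D, hD, hdom, rfl⟩

lemma exists_opt (S : Finset Plane) : ∃ D ⊆ S, Dominates D S ∧ D.card = gamma S S := by
  have h : {n : ℕ | ∃ D ⊆ S, Dominates D S ∧ D.card = n}.Nonempty :=
    ⟨S.card, S, Finset.Subset.refl S, fun p hp => ⟨p, hp, by simp⟩, rfl⟩
  exact Nat.sInf_mem h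

/-- `x` is within distance 1 of a block boundary for shift `j`. -/
def Near (ℓ j : ℕ) (x : ℝ) : Prop :=
  ∃ k : ℤ, 2*(ℓ:ℝ)*k + 2*j - 1 ≤ x ∧ x < 2*(ℓ:ℝ)*k + 2*j + 1

noncomputable def cnt (ℓ j : ℕ) (x : ℝ) : ℕ := by
  classical exact if Near ℓ j x then 2 else 1

lemma card_exp (ℓ j : ℕ) (hl : 0 < ℓ) (x : ℝ) (A : Finset ℤ)
    (hA : ∀ k ∈ A, 2*((ℓ:ℝ)*k + j) - 1 ≤ x ∧ x < 2*((ℓ:ℝ)*(k+1) + j) + 1) :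
    A.card ≤ cnt ℓ j x := by
  classical
  have hlr : (0:ℝ) < (ℓ:ℝ) := by exact_mod_cast hl
  have h1l : (1:ℝ) ≤ (ℓ:ℝ) := by exact_mod_cast hl
  unfold cnt
  split_ifs with hn
  · set m : ℤ := ⌊(x + 1 - 2*j)/(2*ℓ)⌋ with hm
    have hsub : A ⊆ {m-1, m} := by
      intro k hk
      obtain ⟨hk1, hk2⟩ := hA k hk
      have hkm : k ≤ m := by
        rw [hm]
        apply Int.le_floor.2
        rw [le_div_iff₀ (by positivity)]
        linarith
      have hfl : (m:ℝ) ≤ (x + 1 - 2*j)/(2*ℓ) := Int.floor_le _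
      have hlt : (x + 1 - 2*j)/(2*ℓ) < (k:ℝ) + 2 := by
        rw [div_lt_iff₀ (by positivity)]
        nlinarith
      have hmk : m < k + 2 := by exact_mod_cast lt_of_le_of_lt hfl hlt
      simp only [Finset.mem_insert, Finset.mem_singleton]
      omega
    exact le_trans (Finset.card_le_card hsub)
      (le_trans (Finset.card_insert_le _ _) (by simp))
  · apply Finset.card_le_one.2
    intro a ha b hb
    by_contra hne
    have key : ∀ a ∈ A, ∀ b ∈ A, a < b → False := by
      intro a ha b hb hab
      apply hn
      refine ⟨b, ?_, ?_⟩
      · linarith [(hA b hb).1]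
      · have hcast : ((a:ℝ)+1) ≤ (b:ℝ) := by exact_mod_cast hab
        have hmul : (ℓ:ℝ)*((a:ℝ)+1) ≤ (ℓ:ℝ)*(b:ℝ) :=
          mul_le_mul_of_nonneg_left hcast (le_of_lt hlr)
        linarith [(hA a ha).2]
    rcases lt_or_gt_of_ne hne with h | h
    · exact key a ha b hb h
    · exact key b hb a ha h

lemma sum_cnt (ℓ : ℕ) (x : ℝ) :
    ∑ j ∈ Finset.range ℓ, cnt ℓ j x ≤ ℓ + 1 := by
  classical
  have hc : ∀ j, cnt ℓ j x = 1 + (if Near ℓ j x then 1 else 0) := by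
    intro j; unfold cnt; split_ifs <;> rfl
  simp only [hc]
  rw [Finset.sum_add_distrib, Finset.sum_const, Finset.card_range, smul_eq_mul, mul_one,
    ← Finset.card_filter]
  have hone : ((Finset.range ℓ).filter (fun j => Near ℓ j x)).card ≤ 1 := by
    apply Finset.card_le_one.2
    intro a ha b hb
    simp only [Finset.mem_filter, Finset.mem_range] at ha hb
    obtain ⟨halt, k, hk1, hk2⟩ := ha
    obtain ⟨hblt, k', hk1', hk2'⟩ := hb
    have h0 : (ℓ:ℤ)*(k - k') + ((a:ℤ) - b) = 0 := by
      have hr1 : ((((ℓ:ℤ)*(k - k') + ((a:ℤ) - b)) : ℤ) : ℝ) < 1 := by push_cast; linarith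
      have hr2 : (-1:ℝ) < ((((ℓ:ℤ)*(k - k') + ((a:ℤ) - b)) : ℤ) : ℝ) := by push_cast; linarith
      have h1 : ((ℓ:ℤ)*(k - k') + ((a:ℤ) - b)) < 1 := by exact_mod_cast hr1
      have h2 : (-1:ℤ) < ((ℓ:ℤ)*(k - k') + ((a:ℤ) - b)) := by exact_mod_cast hr2
      omega
    have hdvd : (ℓ:ℤ) ∣ ((a:ℤ) - b) := ⟨k' - k, by linarith⟩
    have habs : |(a:ℤ) - b| < (ℓ:ℤ) := by rw [abs_lt]; omega
    have := Int.eq_zero_of_abs_lt_dvd hdvd habs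
    omega
  omega

noncomputable def idx1 (ℓ j : ℕ) (x : ℝ) : ℤ := ⌊(x - 2*j)/(2*ℓ)⌋

lemma idx1_eq_iff (ℓ j : ℕ) (hl : 0 < ℓ) (x : ℝ) (k : ℤ) :
    idx1 ℓ j x = k ↔
      (2 * ((ℓ:ℝ) * (k:ℝ) + (j:ℝ)) ≤ x ∧ x < 2 * ((ℓ:ℝ) * ((k:ℝ) + 1) + (j:ℝ))) := by
  have hlr : (0:ℝ) < 2*(ℓ:ℝ) := by
    have : (0:ℝ) < (ℓ:ℝ) := by exact_mod_cast hl
    linarith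
  unfold idx1
  rw [Int.floor_eq_iff, le_div_iff₀ hlr, div_lt_iff₀ hlr]
  constructor <;> rintro ⟨u, v⟩ <;> constructor <;> push_cast at * <;> nlinarith

lemma mem_block2_iff (S : Finset Plane) (ℓ₁ ℓ₂ j₁ j₂ : ℕ) (k₁ k₂ : ℤ) (p : Plane)
    (h₁ : 0 < ℓ₁) (h₂ : 0 < ℓ₂) :
    p ∈ block2 S ℓ₁ ℓ₂ j₁ j₂ k₁ k₂ ↔
      p ∈ S ∧ idx1 ℓ₁ j₁ (p 0) = k₁ ∧ idx1 ℓ₂ j₂ (p 1) = k₂ := by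
  unfold block2
  rw [Finset.mem_filter, idx1_eq_iff ℓ₁ j₁ h₁ (p 0) k₁, idx1_eq_iff ℓ₂ j₂ h₂ (p 1) k₂]

/-- Two-dimensional shifting: there are shifts `j₁ ∈ {0, …, ℓ₁-1}` and `j₂ ∈ {0, …, ℓ₂-1}`
such that the sum, over the nonempty rectangular blocks, of the minimum sizes of dominating
sets is at most `(1 + 1/ℓ₁)(1 + 1/ℓ₂) · γ_S(S)`. -/
theorem two_dimensional_shifting (S : Finset Plane) (ℓ₁ ℓ₂ : ℕ)
    (h₁ : 0 < ℓ₁) (h₂ : 0 < ℓ₂) :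
    ∃ j₁ < ℓ₁, ∃ j₂ < ℓ₂,
      (∑ᶠ kk ∈ {kk : ℤ × ℤ | (block2 S ℓ₁ ℓ₂ j₁ j₂ kk.1 kk.2).Nonempty},
          (gamma S (block2 S ℓ₁ ℓ₂ j₁ j₂ kk.1 kk.2) : ℝ)) ≤
        (1 + 1 / (ℓ₁ : ℝ)) * (1 + 1 / (ℓ₂ : ℝ)) * (gamma S S : ℝ) := by
  classical
  obtain ⟨D, hDS, hDdom, hDcard⟩ := exists_opt S
  set idx : ℕ → ℕ → Plane → ℤ × ℤ :=
    fun j₁ j₂ p => (idx1 ℓ₁ j₁ (p 0), idx1 ℓ₂ j₂ (p 1)) with hidx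
  set K : ℕ → ℕ → Finset (ℤ × ℤ) := fun j₁ j₂ => S.image (idx j₁ j₂) with hK
  set F : ℕ → ℕ → ℕ :=
    fun j₁ j₂ => ∑ kk ∈ K j₁ j₂, gamma S (block2 S ℓ₁ ℓ₂ j₁ j₂ kk.1 kk.2) with hF
  -- the finsum equals the finite sum over K
  have hfin : ∀ j₁ j₂, (∑ᶠ kk ∈ {kk : ℤ × ℤ | (block2 S ℓ₁ ℓ₂ j₁ j₂ kk.1 kk.2).Nonempty},
      (gamma S (block2 S ℓ₁ ℓ₂ j₁ j₂ kk.1 kk.2) : ℝ)) = (F j₁ j₂ : ℝ) := by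
    intro j₁ j₂
    have hset : {kk : ℤ × ℤ | (block2 S ℓ₁ ℓ₂ j₁ j₂ kk.1 kk.2).Nonempty}
        = ↑(K j₁ j₂) := by
      ext kk
      simp only [Set.mem_setOf_eq, hK, Finset.coe_image, Set.mem_image, Finset.mem_coe]
      constructor
      · rintro ⟨p, hp⟩
        rw [mem_block2_iff S ℓ₁ ℓ₂ j₁ j₂ kk.1 kk.2 p h₁ h₂] at hp
        exact ⟨p, hp.1, Prod.ext hp.2.1 hp.2.2⟩
      · rintro ⟨p, hpS, rfl⟩
        exact ⟨p, (mem_block2_iff S ℓ₁ ℓ₂ j₁ j₂ _ _ p h₁ h₂).2 ⟨hpS, rfl, rfl⟩⟩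
    rw [hset, finsum_mem_coe_finset, hF]
    push_cast
    rfl
  -- expanded-block membership predicate for points of D
  set P : ℕ → ℕ → ℤ × ℤ → Plane → Prop := fun j₁ j₂ kk q =>
    (2*((ℓ₁:ℝ)*kk.1 + j₁) - 1 ≤ q 0 ∧ q 0 < 2*((ℓ₁:ℝ)*(kk.1+1) + j₁) + 1) ∧
    (2*((ℓ₂:ℝ)*kk.2 + j₂) - 1 ≤ q 1 ∧ q 1 < 2*((ℓ₂:ℝ)*(kk.2+1) + j₂) + 1) with hP
  -- per-shift bound
  have hbound : ∀ j₁ j₂, F j₁ j₂ ≤ ∑ q ∈ D, cnt ℓ₁ j₁ (q 0) * cnt ℓ₂ j₂ (q 1) := by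
    intro j₁ j₂
    have step1 : F j₁ j₂ ≤ ∑ kk ∈ K j₁ j₂, (D.filter (P j₁ j₂ kk)).card := by
      apply Finset.sum_le_sum
      intro kk _
      apply gamma_le
      · exact (Finset.filter_subset _ _).trans hDS
      · intro p hp
        have hpS : p ∈ S := Finset.mem_of_mem_filter _ hp
        obtain ⟨q, hqD, hq⟩ := hDdom p hpS
        refine ⟨q, Finset.mem_filter.2 ⟨hqD, ?_⟩, hq⟩
        unfold block2 at hp
        rw [Finset.mem_filter] at hp
        obtain ⟨-, ⟨ha, hb⟩, hc, hd⟩ := hp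
        have e0 : |p 0 - q 0| ≤ 1 := le_trans (coord_abs_le_dist p q 0) hq
        have e1 : |p 1 - q 1| ≤ 1 := le_trans (coord_abs_le_dist p q 1) hq
        rw [abs_le] at e0 e1
        simp only [hP]
        push_cast
        push_cast at ha hb hc hd
        refine ⟨⟨by linarith, by linarith⟩, by linarith, by linarith⟩
    have step2 : ∑ kk ∈ K j₁ j₂, (D.filter (P j₁ j₂ kk)).card
        = ∑ q ∈ D, ((K j₁ j₂).filter (fun kk => P j₁ j₂ kk q)).card := by
      simp only [Finset.card_filter]
      rw [Finset.sum_comm]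
    have step3 : ∀ q ∈ D, ((K j₁ j₂).filter (fun kk => P j₁ j₂ kk q)).card
        ≤ cnt ℓ₁ j₁ (q 0) * cnt ℓ₂ j₂ (q 1) := by
      intro q hq
      set A₁ : Finset ℤ := ((K j₁ j₂).image Prod.fst).filter
        (fun k : ℤ => 2*((ℓ₁:ℝ)*k + j₁) - 1 ≤ q 0 ∧ q 0 < 2*((ℓ₁:ℝ)*(k+1) + j₁) + 1) with hA₁
      set A₂ : Finset ℤ := ((K j₁ j₂).image Prod.snd).filter
        (fun k : ℤ => 2*((ℓ₂:ℝ)*k + j₂) - 1 ≤ q 1 ∧ q 1 < 2*((ℓ₂:ℝ)*(k+1) + j₂) + 1) with hA₂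
      have hsub : (K j₁ j₂).filter (fun kk => P j₁ j₂ kk q) ⊆ A₁ ×ˢ A₂ := by
        intro kk hkk
        rw [Finset.mem_filter] at hkk
        rw [Finset.mem_product]
        constructor
        · rw [hA₁, Finset.mem_filter]
          exact ⟨Finset.mem_image_of_mem _ hkk.1, hkk.2.1⟩
        · rw [hA₂, Finset.mem_filter]
          exact ⟨Finset.mem_image_of_mem _ hkk.1, hkk.2.2⟩
      calc ((K j₁ j₂).filter (fun kk => P j₁ j₂ kk q)).card
          ≤ (A₁ ×ˢ A₂).card := Finset.card_le_card hsub
        _ = A₁.card * A₂.card := Finset.card_product _ _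
        _ ≤ cnt ℓ₁ j₁ (q 0) * cnt ℓ₂ j₂ (q 1) := by
            apply Nat.mul_le_mul
            · exact card_exp ℓ₁ j₁ h₁ (q 0) A₁
                (fun k hk => (Finset.mem_filter.1 hk).2)
            · exact card_exp ℓ₂ j₂ h₂ (q 1) A₂
                (fun k hk => (Finset.mem_filter.1 hk).2)
    calc F j₁ j₂ ≤ ∑ kk ∈ K j₁ j₂, (D.filter (P j₁ j₂ kk)).card := step1
      _ = ∑ q ∈ D, ((K j₁ j₂).filter (fun kk => P j₁ j₂ kk q)).card := step2
      _ ≤ ∑ q ∈ D, cnt ℓ₁ j₁ (q 0) * cnt ℓ₂ j₂ (q 1) := Finset.sum_le_sum step3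
  -- total bound over all shifts
  have htotal : ∑ j₁ ∈ Finset.range ℓ₁, ∑ j₂ ∈ Finset.range ℓ₂, F j₁ j₂
      ≤ (ℓ₁+1)*(ℓ₂+1)*gamma S S := by
    calc ∑ j₁ ∈ Finset.range ℓ₁, ∑ j₂ ∈ Finset.range ℓ₂, F j₁ j₂
        ≤ ∑ j₁ ∈ Finset.range ℓ₁, ∑ j₂ ∈ Finset.range ℓ₂,
            ∑ q ∈ D, cnt ℓ₁ j₁ (q 0) * cnt ℓ₂ j₂ (q 1) := by
          apply Finset.sum_le_sum; intro j₁ _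
          apply Finset.sum_le_sum; intro j₂ _
          exact hbound j₁ j₂
      _ = ∑ j₁ ∈ Finset.range ℓ₁, ∑ q ∈ D,
            ∑ j₂ ∈ Finset.range ℓ₂, cnt ℓ₁ j₁ (q 0) * cnt ℓ₂ j₂ (q 1) :=
          Finset.sum_congr rfl (fun j₁ _ => Finset.sum_comm)
      _ = ∑ q ∈ D, ∑ j₁ ∈ Finset.range ℓ₁,
            ∑ j₂ ∈ Finset.range ℓ₂, cnt ℓ₁ j₁ (q 0) * cnt ℓ₂ j₂ (q 1) :=
          Finset.sum_comm
      _ = ∑ q ∈ D, (∑ j₁ ∈ Finset.range ℓ₁, cnt ℓ₁ j₁ (q 0))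
            * (∑ j₂ ∈ Finset.range ℓ₂, cnt ℓ₂ j₂ (q 1)) := by
          apply Finset.sum_congr rfl
          intro q _
          rw [Finset.sum_mul_sum]
      _ ≤ ∑ q ∈ D, (ℓ₁+1)*(ℓ₂+1) := by
          apply Finset.sum_le_sum
          intro q _
          exact Nat.mul_le_mul (sum_cnt ℓ₁ (q 0)) (sum_cnt ℓ₂ (q 1))
      _ = D.card * ((ℓ₁+1)*(ℓ₂+1)) := by rw [Finset.sum_const, smul_eq_mul]
      _ = (ℓ₁+1)*(ℓ₂+1)*gamma S S := by rw [hDcard, mul_comm]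
  -- pick the minimizing shift pair
  obtain ⟨jj, hjj, hmin⟩ := Finset.exists_min_image
    (Finset.range ℓ₁ ×ˢ Finset.range ℓ₂) (fun jj => F jj.1 jj.2)
    ⟨(0, 0), by simp [Finset.mem_product, h₁, h₂]⟩
  have hmain : ℓ₁*ℓ₂*(F jj.1 jj.2) ≤ (ℓ₁+1)*(ℓ₂+1)*gamma S S := by
    have h5 := Finset.card_nsmul_le_sum
      (Finset.range ℓ₁ ×ˢ Finset.range ℓ₂) (fun jj => F jj.1 jj.2) _ hmin
    rw [Finset.card_product, Finset.card_range, Finset.card_range, smul_eq_mul,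
      Finset.sum_product] at h5
    exact le_trans h5 htotal
  rw [Finset.mem_product, Finset.mem_range, Finset.mem_range] at hjj
  refine ⟨jj.1, hjj.1, jj.2, hjj.2, ?_⟩
  rw [hfin jj.1 jj.2]
  have hl1 : (0:ℝ) < (ℓ₁:ℝ) := by exact_mod_cast h₁
  have hl2 : (0:ℝ) < (ℓ₂:ℝ) := by exact_mod_cast h₂
  rw [show (1 + 1/(ℓ₁:ℝ)) * (1 + 1/(ℓ₂:ℝ)) * (gamma S S : ℝ)
      = (((ℓ₁:ℝ)+1)*((ℓ₂:ℝ)+1)*(gamma S S : ℝ))/((ℓ₁:ℝ)*(ℓ₂:ℝ)) by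
    field_simp]
  rw [le_div_iff₀ (mul_pos hl1 hl2)]
  have hcast : ((ℓ₁*ℓ₂*(F jj.1 jj.2) : ℕ) : ℝ) ≤ (((ℓ₁+1)*(ℓ₂+1)*gamma S S : ℕ) : ℝ) := by
    exact_mod_cast hmain
  push_cast at hcast
  linarith
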